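/- arXiv:2308.08184 — 2 statements merged into one kernel-verified Lean document; each statement's English description precedes it below -/
import Mathlib

section
/- Let λ, μ ∈ ℝ with μ > 0 and λ + μ > 0, let ρ > 0 and ω̃ ∈ ℂ with ω̃ ≠ 0, and set k₁² = ρω̃²/(λ+2μ), k₂² = ρω̃²/μ. Fix ξ ∈ ℝ³ and define, for x ≠ ξ, r = ‖x − ξ‖ and the 3×3 matrix-valued function u*(x) with components u*_{ij}(x) = (1/(4πρω̃²)) ∂_i∂_j[(exp(ik₂r) − exp(ik₁r))/r] + (1/(4πμ)) (exp(ik₂r)/r) δ_{ij}. Then every column of u* satisfies the homogeneous time-harmonic viscoelastic Navier equation away from the source: for each m and each x ≠ ξ, (λ+μ)∂_j(∂₁u*_{1m} + ∂₂u*_{2m} + ∂₃u*_{3m})(x) + μΔu*_{jm}(x) + ρω̃² u*_{jm}(x) = 0 for j = 1,2,3. -/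
open Complex Matrix

/-- Partial derivative in the j-th coordinate direction of a function on ℝ³. -/
noncomputable def pd (j : Fin 3) (f : (Fin 3 → ℝ) → ℂ) : (Fin 3 → ℝ) → ℂ :=
  fun x => fderiv ℝ f x (Pi.single j 1)

/-- The Laplace operator Δ = ∂₁² + ∂₂² + ∂₃² on ℝ³. -/
noncomputable def lap (f : (Fin 3 → ℝ) → ℂ) : (Fin 3 → ℝ) → ℂ :=
  fun x => ∑ j : Fin 3, pd j (pd j f) x

/-- The divergence ∂₁u₁ + ∂₂u₂ + ∂₃u₃ of a vector field u : ℝ³ → ℂ³. -/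
noncomputable def divg (u : (Fin 3 → ℝ) → Fin 3 → ℂ) : (Fin 3 → ℝ) → ℂ :=
  fun x => ∑ i : Fin 3, pd i (fun y => u y i) x

/-- The time-harmonic viscoelastic Navier operator
`(L u)_j = (λ+μ)∂_j(div u) + μ Δ u_j + ρ ω̃² u_j`. -/
noncomputable def navierOp (lam mu rho om : ℂ) (u : (Fin 3 → ℝ) → Fin 3 → ℂ)
    (j : Fin 3) : (Fin 3 → ℝ) → ℂ :=
  fun x => (lam + mu) * pd j (divg u) x + mu * lap (fun y => u y j) x +
    rho * om ^ 2 * u x j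



noncomputable def f0 (k : ℂ) (t : ℝ) : ℂ := Complex.exp (I*k*t) / t
noncomputable def f1 (k : ℂ) (t : ℝ) : ℂ := Complex.exp (I*k*t) * (I*k*t - 1) / (t:ℂ)^3
noncomputable def f2 (k : ℂ) (t : ℝ) : ℂ :=
  Complex.exp (I*k*t) * (-(k^2*t^2) - 3*(I*k*t) + 3) / (t:ℂ)^5
noncomputable def f3 (k : ℂ) (t : ℝ) : ℂ :=
  Complex.exp (I*k*t) * (-(I*k^3*t^3) + 6*(k^2*t^2) + 15*(I*k*t) - 15) / (t:ℂ)^7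
noncomputable def f4 (k : ℂ) (t : ℝ) : ℂ :=
  Complex.exp (I*k*t) * (k^4*t^4 + 10*(I*k^3*t^3) - 45*(k^2*t^2) - 105*(I*k*t) + 105) / (t:ℂ)^9

lemma hasDerivAt_ofReal (t : ℝ) : HasDerivAt (fun s : ℝ => (s : ℂ)) 1 t := by
  simpa using (hasDerivAt_id t).ofReal_comp

lemma hasDerivAt_cexp_aux (k : ℂ) (t : ℝ) :
    HasDerivAt (fun s : ℝ => Complex.exp (I*k*s)) (Complex.exp (I*k*t) * (I*k)) t := by
  simpa using (((hasDerivAt_ofReal t).const_mul (I*k)).cexp)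

lemma hasDerivAt_cpow_aux (n : ℕ) (t : ℝ) :
    HasDerivAt (fun s : ℝ => ((s:ℂ))^n) ((n:ℂ)*(t:ℂ)^(n-1)) t := by
  simpa using (hasDerivAt_pow n ((t:ℂ))).comp_ofReal

lemma hasDerivAt_f0 (k : ℂ) {t : ℝ} (ht : t ≠ 0) : HasDerivAt (f0 k) (t * f1 k t) t := by
  have hc : (t:ℂ) ≠ 0 := Complex.ofReal_ne_zero.2 ht
  have h := (hasDerivAt_cexp_aux k t).fun_div (hasDerivAt_ofReal t) hc
  refine h.congr_deriv ?_
  unfold f1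
  field_simp

lemma hasDerivAt_f1 (k : ℂ) {t : ℝ} (ht : t ≠ 0) : HasDerivAt (f1 k) (t * f2 k t) t := by
  have hc : (t:ℂ) ≠ 0 := Complex.ofReal_ne_zero.2 ht
  have hP : HasDerivAt (fun s : ℝ => I*k*(s:ℂ) - 1) (I*k) t := by
    simpa using ((hasDerivAt_ofReal t).const_mul (I*k)).sub_const 1
  have h := ((hasDerivAt_cexp_aux k t).fun_mul hP).fun_div (hasDerivAt_cpow_aux 3 t) (pow_ne_zero 3 hc)
  refine h.congr_deriv ?_
  unfold f2
  have hI := Complex.I_sq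
  field_simp
  ring_nf
  rw [Complex.I_sq]
  ring

lemma hasDerivAt_f2 (k : ℂ) {t : ℝ} (ht : t ≠ 0) : HasDerivAt (f2 k) (t * f3 k t) t := by
  have hc : (t:ℂ) ≠ 0 := Complex.ofReal_ne_zero.2 ht
  have hP : HasDerivAt (fun s : ℝ => -(k^2*(s:ℂ)^2) - 3*(I*k*(s:ℂ)) + 3)
      (-(k^2*(2*(t:ℂ))) - 3*(I*k)) t := by
    have h1 := ((hasDerivAt_cpow_aux 2 t).const_mul (k^2)).neg
    have h2 := ((hasDerivAt_ofReal t).const_mul (I*k)).const_mul (3:ℂ)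
    simpa using ((h1.sub h2).add_const (3:ℂ))
  have h := ((hasDerivAt_cexp_aux k t).fun_mul hP).fun_div (hasDerivAt_cpow_aux 5 t) (pow_ne_zero 5 hc)
  refine h.congr_deriv ?_
  unfold f3
  field_simp
  ring_nf
  rw [Complex.I_sq]
  ring

lemma hasDerivAt_f3 (k : ℂ) {t : ℝ} (ht : t ≠ 0) : HasDerivAt (f3 k) (t * f4 k t) t := by
  have hc : (t:ℂ) ≠ 0 := Complex.ofReal_ne_zero.2 ht
  have hP : HasDerivAt (fun s : ℝ => -(I*k^3*(s:ℂ)^3) + 6*(k^2*(s:ℂ)^2) + 15*(I*k*(s:ℂ)) - 15)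
      (-(I*k^3*(3*(t:ℂ)^2)) + 6*(k^2*(2*(t:ℂ))) + 15*(I*k)) t := by
    have h1 := ((hasDerivAt_cpow_aux 3 t).const_mul (I*k^3)).neg
    have h2 := (hasDerivAt_cpow_aux 2 t).const_mul (k^2)
    have h3 := (hasDerivAt_ofReal t).const_mul (I*k)
    simpa [mul_comm, mul_assoc, mul_left_comm] using
      (((h1.add (h2.const_mul (6:ℂ))).add (h3.const_mul (15:ℂ))).sub_const (15:ℂ))
  have h := ((hasDerivAt_cexp_aux k t).fun_mul hP).fun_div (hasDerivAt_cpow_aux 7 t) (pow_ne_zero 7 hc)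
  refine h.congr_deriv ?_
  unfold f4
  field_simp
  ring_nf
  rw [Complex.I_sq]
  ring_nf


noncomputable def qq (ξ x : Fin 3 → ℝ) : ℝ := ∑ i, (x i - ξ i)^2
noncomputable def rr (ξ x : Fin 3 → ℝ) : ℝ := Real.sqrt (qq ξ x)
noncomputable def dd (ξ : Fin 3 → ℝ) (i : Fin 3) (x : Fin 3 → ℝ) : ℂ := ((x i - ξ i : ℝ) : ℂ)

noncomputable def ell (ξ x : Fin 3 → ℝ) : (Fin 3 → ℝ) →L[ℝ] ℝ :=
  ∑ i, (x i - ξ i) • ContinuousLinearMap.proj i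

noncomputable def DRC (ξ x : Fin 3 → ℝ) : (Fin 3 → ℝ) →L[ℝ] ℂ :=
  Complex.ofRealCLM.comp (ell ξ x)

lemma ell_apply (ξ x : Fin 3 → ℝ) (j : Fin 3) : ell ξ x (Pi.single j 1) = x j - ξ j := by
  simp [ell, ContinuousLinearMap.sum_apply, Pi.single_apply]

lemma DRC_apply (ξ x : Fin 3 → ℝ) (j : Fin 3) : DRC ξ x (Pi.single j 1) = dd ξ j x := by
  simp [DRC, ell_apply, dd]

lemma qq_pos {ξ x : Fin 3 → ℝ} (h : x ≠ ξ) : 0 < qq ξ x := by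
  obtain ⟨i, hi⟩ : ∃ i, x i ≠ ξ i := by
    by_contra hc
    push_neg at hc
    exact h (funext hc)
  refine Finset.sum_pos' (fun i _ => sq_nonneg _) ⟨i, Finset.mem_univ i, ?_⟩
  have : x i - ξ i ≠ 0 := sub_ne_zero.2 hi
  positivity

lemma rr_pos {ξ x : Fin 3 → ℝ} (h : x ≠ ξ) : 0 < rr ξ x := Real.sqrt_pos.2 (qq_pos h)

lemma sq_rr {ξ x : Fin 3 → ℝ} (h : x ≠ ξ) : rr ξ x ^ 2 = qq ξ x :=
  Real.sq_sqrt (qq_pos h).le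

lemma hasFDerivAt_proj (i : Fin 3) (x : Fin 3 → ℝ) :
    HasFDerivAt (fun y : Fin 3 → ℝ => y i)
      (ContinuousLinearMap.proj i : (Fin 3 → ℝ) →L[ℝ] ℝ) x :=
  ContinuousLinearMap.hasFDerivAt
    (ContinuousLinearMap.proj i : (Fin 3 → ℝ) →L[ℝ] ℝ)

lemma hasFDerivAt_qq (ξ x : Fin 3 → ℝ) : HasFDerivAt (qq ξ) ((2:ℝ) • ell ξ x) x := by
  have h : ∀ i : Fin 3, HasFDerivAt (fun y : Fin 3 → ℝ => (y i - ξ i)^2)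
      ((2*(x i - ξ i)) • (ContinuousLinearMap.proj i : (Fin 3 → ℝ) →L[ℝ] ℝ)) x := by
    intro i
    have h1 : HasFDerivAt (fun y : Fin 3 → ℝ => y i - ξ i)
        (ContinuousLinearMap.proj i : (Fin 3 → ℝ) →L[ℝ] ℝ) x :=
      (hasFDerivAt_proj i x).sub_const (ξ i)
    have h2 := h1.fun_mul h1
    have he2 : (fun y : Fin 3 → ℝ => (y i - ξ i)^2)
        = fun y : Fin 3 → ℝ => (y i - ξ i) * (y i - ξ i) := by
      ext y; ring
    rw [he2]
    refine h2.congr_fderiv ?_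
    rw [two_mul, add_smul]
  have hsum := HasFDerivAt.fun_sum (fun i (_ : i ∈ Finset.univ) => h i)
  have he : qq ξ = fun y => ∑ i : Fin 3, (y i - ξ i)^2 := rfl
  rw [he]
  refine hsum.congr_fderiv ?_
  ext v
  simp [ell, ContinuousLinearMap.sum_apply, Finset.mul_sum, smul_smul]
  exact Finset.sum_congr rfl fun i _ => by ring

lemma hasFDerivAt_rr {ξ x : Fin 3 → ℝ} (h : x ≠ ξ) :
    HasFDerivAt (rr ξ) ((rr ξ x)⁻¹ • ell ξ x) x := by
  have hs := (Real.hasDerivAt_sqrt (qq_pos h).ne').comp_hasFDerivAt x (hasFDerivAt_qq ξ x)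
  have he : rr ξ = Real.sqrt ∘ qq ξ := rfl
  rw [he]
  refine hs.congr_fderiv ?_
  rw [smul_smul]
  congr 1
  have h0 : Real.sqrt (qq ξ x) ≠ 0 := (rr_pos h).ne'
  field_simp
  rw [Function.comp_apply, div_self h0]


lemma pd_eq {f : (Fin 3 → ℝ) → ℂ} {L : (Fin 3 → ℝ) →L[ℝ] ℂ} {x : Fin 3 → ℝ}
    (h : HasFDerivAt f L x) (j : Fin 3) : pd j f x = L (Pi.single j 1) := by
  simp only [pd, h.fderiv]

lemma hasFDerivAt_radial {ξ x : Fin 3 → ℝ} (h : x ≠ ξ) {g G : ℝ → ℂ}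
    (hg : ∀ t : ℝ, t ≠ 0 → HasDerivAt g (t * G t) t) :
    HasFDerivAt (fun y => g (rr ξ y)) (G (rr ξ x) • DRC ξ x) x := by
  have hr0 : rr ξ x ≠ 0 := (rr_pos h).ne'
  have hgr := (hg (rr ξ x) hr0).hasFDerivAt
  have hcomp := hgr.comp x (hasFDerivAt_rr h)
  have he : (fun y => g (rr ξ y)) = g ∘ rr ξ := rfl
  rw [he]
  refine hcomp.congr_fderiv ?_
  ext v
  simp only [ContinuousLinearMap.smul_apply, ContinuousLinearMap.comp_apply,
    ContinuousLinearMap.smulRight_apply, ContinuousLinearMap.one_apply, DRC,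
    Complex.ofRealCLM_apply, smul_eq_mul, Complex.real_smul,
    ContinuousLinearMap.toSpanSingleton_apply]
  push_cast
  field_simp
  rw [div_eq_iff (by exact_mod_cast (rr_pos h).ne' : ((rr ξ x : ℂ)) ≠ 0)]
  ring

lemma hasFDerivAt_dd (ξ : Fin 3 → ℝ) (i : Fin 3) (x : Fin 3 → ℝ) :
    HasFDerivAt (dd ξ i)
      (Complex.ofRealCLM.comp
        ((ContinuousLinearMap.proj i : (Fin 3 → ℝ) →L[ℝ] ℝ))) x := by
  exact Complex.ofRealCLM.hasFDerivAt.comp x ((hasFDerivAt_proj i x).sub_const (ξ i))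

lemma P1 {ξ x : Fin 3 → ℝ} (h : x ≠ ξ) {g G : ℝ → ℂ}
    (hg : ∀ t : ℝ, t ≠ 0 → HasDerivAt g (t * G t) t) (l : Fin 3) :
    pd l (fun y => g (rr ξ y)) x = dd ξ l x * G (rr ξ x) := by
  rw [pd_eq (hasFDerivAt_radial h hg) l]
  simp [ContinuousLinearMap.smul_apply, DRC_apply, smul_eq_mul]
  ring

lemma P2 {ξ x : Fin 3 → ℝ} (h : x ≠ ξ) {g G : ℝ → ℂ}
    (hg : ∀ t : ℝ, t ≠ 0 → HasDerivAt g (t * G t) t) (a l : Fin 3) :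
    pd l (fun y => dd ξ a y * g (rr ξ y)) x =
      (if a = l then 1 else 0) * g (rr ξ x) +
        dd ξ a x * (dd ξ l x * G (rr ξ x)) := by
  rw [pd_eq ((hasFDerivAt_dd ξ a x).fun_mul (hasFDerivAt_radial h hg)) l]
  simp [ContinuousLinearMap.add_apply, ContinuousLinearMap.smul_apply,
    ContinuousLinearMap.comp_apply, DRC_apply, Complex.ofRealCLM_apply,
    Pi.single_apply, apply_ite Complex.ofReal, smul_eq_mul]
  split_ifs <;> ring

lemma P3 {ξ x : Fin 3 → ℝ} (h : x ≠ ξ) {g G : ℝ → ℂ}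
    (hg : ∀ t : ℝ, t ≠ 0 → HasDerivAt g (t * G t) t) (a b l : Fin 3) :
    pd l (fun y => dd ξ a y * dd ξ b y * g (rr ξ y)) x =
      (if a = l then 1 else 0) * (dd ξ b x * g (rr ξ x)) +
        (if b = l then 1 else 0) * (dd ξ a x * g (rr ξ x)) +
        dd ξ a x * dd ξ b x * (dd ξ l x * G (rr ξ x)) := by
  rw [pd_eq (((hasFDerivAt_dd ξ a x).fun_mul (hasFDerivAt_dd ξ b x)).fun_mul
    (hasFDerivAt_radial h hg)) l]
  simp [ContinuousLinearMap.add_apply, ContinuousLinearMap.smul_apply,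
    ContinuousLinearMap.comp_apply, DRC_apply, Complex.ofRealCLM_apply,
    Pi.single_apply, apply_ite Complex.ofReal, smul_eq_mul]
  split_ifs <;> ring

lemma P4 {ξ x : Fin 3 → ℝ} (h : x ≠ ξ) {g G : ℝ → ℂ}
    (hg : ∀ t : ℝ, t ≠ 0 → HasDerivAt g (t * G t) t) (a b c l : Fin 3) :
    pd l (fun y => dd ξ a y * dd ξ b y * dd ξ c y * g (rr ξ y)) x =
      (if a = l then 1 else 0) * (dd ξ b x * dd ξ c x * g (rr ξ x)) +
        (if b = l then 1 else 0) * (dd ξ a x * dd ξ c x * g (rr ξ x)) +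
        (if c = l then 1 else 0) * (dd ξ a x * dd ξ b x * g (rr ξ x)) +
        dd ξ a x * dd ξ b x * dd ξ c x * (dd ξ l x * G (rr ξ x)) := by
  rw [pd_eq ((((hasFDerivAt_dd ξ a x).fun_mul (hasFDerivAt_dd ξ b x)).fun_mul
    (hasFDerivAt_dd ξ c x)).fun_mul (hasFDerivAt_radial h hg)) l]
  simp [ContinuousLinearMap.add_apply, ContinuousLinearMap.smul_apply,
    ContinuousLinearMap.comp_apply, DRC_apply, Complex.ofRealCLM_apply,
    Pi.single_apply, apply_ite Complex.ofReal, smul_eq_mul]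
  split_ifs <;> ring


lemma hh1 (k : ℂ) {t : ℝ} (ht : t ≠ 0) :
    3 * f1 k t + (t:ℂ)^2 * f2 k t = -k^2 * f0 k t := by
  have hc : (t:ℂ) ≠ 0 := Complex.ofReal_ne_zero.2 ht
  unfold f0 f1 f2
  field_simp
  ring

lemma hh2 (k : ℂ) {t : ℝ} (ht : t ≠ 0) :
    5 * f2 k t + (t:ℂ)^2 * f3 k t = -k^2 * f1 k t := by
  have hc : (t:ℂ) ≠ 0 := Complex.ofReal_ne_zero.2 ht
  unfold f1 f2 f3
  field_simp
  ring

lemma hh3 (k : ℂ) {t : ℝ} (ht : t ≠ 0) :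
    7 * f3 k t + (t:ℂ)^2 * f4 k t = -k^2 * f2 k t := by
  have hc : (t:ℂ) ≠ 0 := Complex.ofReal_ne_zero.2 ht
  unfold f2 f3 f4
  field_simp
  ring

lemma pd_congr {f g : (Fin 3 → ℝ) → ℂ} {x : Fin 3 → ℝ}
    (h : f =ᶠ[nhds x] g) (j : Fin 3) : pd j f x = pd j g x := by
  simp only [pd, h.fderiv_eq]

lemma ev_of_onU {ξ : Fin 3 → ℝ} {f g : (Fin 3 → ℝ) → ℂ}
    (h : ∀ y, y ≠ ξ → f y = g y) {x : Fin 3 → ℝ} (hx : x ≠ ξ) :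
    f =ᶠ[nhds x] g := by
  have hU : IsOpen {y : Fin 3 → ℝ | y ≠ ξ} := isOpen_ne
  exact Filter.eventuallyEq_of_mem (hU.mem_nhds hx) h

lemma sum_delta_mul (m : Fin 3) (c : Fin 3 → ℂ) :
    ∑ i : Fin 3, (if i = m then 1 else 0) * c i = c m := by
  simp [ite_mul]

lemma sum_dd_sq (ξ x : Fin 3 → ℝ) (hx : x ≠ ξ) :
    ∑ i : Fin 3, dd ξ i x ^ 2 = ((rr ξ x : ℝ) : ℂ)^2 := by
  have : ∑ i : Fin 3, dd ξ i x ^ 2 = ((qq ξ x : ℝ) : ℂ) := by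
    unfold dd qq
    push_cast
    rfl
  rw [this, ← sq_rr hx]
  push_cast
  rfl


lemma P5 {ξ x : Fin 3 → ℝ} (h : x ≠ ξ) {g₁ G₁ g₂ G₂ g₃ G₃ : ℝ → ℂ}
    (h₁ : ∀ t : ℝ, t ≠ 0 → HasDerivAt g₁ (t * G₁ t) t)
    (h₂ : ∀ t : ℝ, t ≠ 0 → HasDerivAt g₂ (t * G₂ t) t)
    (h₃ : ∀ t : ℝ, t ≠ 0 → HasDerivAt g₃ (t * G₃ t) t)
    (c₁ c₂ c₃ : ℂ) (a b l : Fin 3) :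
    pd l (fun y => c₁ * g₁ (rr ξ y) + c₂ * (dd ξ a y * dd ξ b y * g₂ (rr ξ y)) +
      c₃ * g₃ (rr ξ y)) x =
      c₁ * (dd ξ l x * G₁ (rr ξ x)) +
        c₂ * ((if a = l then 1 else 0) * (dd ξ b x * g₂ (rr ξ x)) +
          (if b = l then 1 else 0) * (dd ξ a x * g₂ (rr ξ x)) +
          dd ξ a x * dd ξ b x * (dd ξ l x * G₂ (rr ξ x))) +
        c₃ * (dd ξ l x * G₃ (rr ξ x)) := by
  rw [pd_eq ((((hasFDerivAt_radial h h₁).const_mul c₁).fun_add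
    ((((hasFDerivAt_dd ξ a x).fun_mul (hasFDerivAt_dd ξ b x)).fun_mul
      (hasFDerivAt_radial h h₂)).const_mul c₂)).fun_add
    ((hasFDerivAt_radial h h₃).const_mul c₃)) l]
  simp [ContinuousLinearMap.add_apply, ContinuousLinearMap.smul_apply,
    ContinuousLinearMap.comp_apply, DRC_apply, Complex.ofRealCLM_apply,
    Pi.single_apply, apply_ite Complex.ofReal, smul_eq_mul]
  split_ifs <;> ring

lemma P6 {ξ x : Fin 3 → ℝ} (h : x ≠ ξ) {g₁ G₁ g₂ G₂ g₃ G₃ : ℝ → ℂ}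
    (h₁ : ∀ t : ℝ, t ≠ 0 → HasDerivAt g₁ (t * G₁ t) t)
    (h₂ : ∀ t : ℝ, t ≠ 0 → HasDerivAt g₂ (t * G₂ t) t)
    (h₃ : ∀ t : ℝ, t ≠ 0 → HasDerivAt g₃ (t * G₃ t) t)
    (c₁ c₂ c₃ c₄ c₅ : ℂ) (a b c l : Fin 3) :
    pd l (fun y => c₁ * (dd ξ a y * g₁ (rr ξ y)) + c₂ * (dd ξ b y * g₁ (rr ξ y)) +
      c₃ * (dd ξ c y * g₁ (rr ξ y)) +
      c₄ * (dd ξ a y * dd ξ b y * dd ξ c y * g₂ (rr ξ y)) +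
      c₅ * (dd ξ c y * g₃ (rr ξ y))) x =
      c₁ * ((if a = l then 1 else 0) * g₁ (rr ξ x) + dd ξ a x * (dd ξ l x * G₁ (rr ξ x))) +
        c₂ * ((if b = l then 1 else 0) * g₁ (rr ξ x) + dd ξ b x * (dd ξ l x * G₁ (rr ξ x))) +
        c₃ * ((if c = l then 1 else 0) * g₁ (rr ξ x) + dd ξ c x * (dd ξ l x * G₁ (rr ξ x))) +
        c₄ * ((if a = l then 1 else 0) * (dd ξ b x * dd ξ c x * g₂ (rr ξ x)) +
          (if b = l then 1 else 0) * (dd ξ a x * dd ξ c x * g₂ (rr ξ x)) +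
          (if c = l then 1 else 0) * (dd ξ a x * dd ξ b x * g₂ (rr ξ x)) +
          dd ξ a x * dd ξ b x * dd ξ c x * (dd ξ l x * G₂ (rr ξ x))) +
        c₅ * ((if c = l then 1 else 0) * g₃ (rr ξ x) + dd ξ c x * (dd ξ l x * G₃ (rr ξ x))) := by
  rw [pd_eq ((((((hasFDerivAt_dd ξ a x).fun_mul (hasFDerivAt_radial h h₁)).const_mul c₁).fun_add
    (((hasFDerivAt_dd ξ b x).fun_mul (hasFDerivAt_radial h h₁)).const_mul c₂)).fun_add
    (((hasFDerivAt_dd ξ c x).fun_mul (hasFDerivAt_radial h h₁)).const_mul c₃)).fun_add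
    (((((hasFDerivAt_dd ξ a x).fun_mul (hasFDerivAt_dd ξ b x)).fun_mul
      (hasFDerivAt_dd ξ c x)).fun_mul (hasFDerivAt_radial h h₂)).const_mul c₄) |>.fun_add
    (((hasFDerivAt_dd ξ c x).fun_mul (hasFDerivAt_radial h h₃)).const_mul c₅)) l]
  simp [ContinuousLinearMap.add_apply, ContinuousLinearMap.smul_apply,
    ContinuousLinearMap.comp_apply, DRC_apply, Complex.ofRealCLM_apply,
    Pi.single_apply, apply_ite Complex.ofReal, smul_eq_mul]
  split_ifs <;> ring

theorem kupradze_fundamental_solves_navier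
    (lam mu rho : ℝ) (hmu : 0 < mu) (hlm : 0 < lam + mu) (hrho : 0 < rho)
    (om k₁ k₂ : ℂ) (hom : om ≠ 0)
    (hk₁ : k₁ ^ 2 = (rho : ℂ) * om ^ 2 / ((lam : ℂ) + 2 * mu))
    (hk₂ : k₂ ^ 2 = (rho : ℂ) * om ^ 2 / (mu : ℂ))
    (ξ : Fin 3 → ℝ)
    (r : (Fin 3 → ℝ) → ℝ)
    (hr : ∀ x, r x = Real.sqrt ((x 0 - ξ 0) ^ 2 + (x 1 - ξ 1) ^ 2 + (x 2 - ξ 2) ^ 2))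
    (φ : (Fin 3 → ℝ) → ℂ)
    (hφ : ∀ x, φ x =
      (Complex.exp (Complex.I * k₂ * r x) - Complex.exp (Complex.I * k₁ * r x)) / (r x : ℂ))
    (ustar : Fin 3 → Fin 3 → (Fin 3 → ℝ) → ℂ)
    (hustar : ∀ i j x, ustar i j x =
      (1 / (4 * (Real.pi : ℂ) * rho * om ^ 2)) * pd i (pd j φ) x +
        (1 / (4 * (Real.pi : ℂ) * mu)) * (Complex.exp (Complex.I * k₂ * r x) / (r x : ℂ)) *
          (if i = j then 1 else 0)) :
    ∀ m : Fin 3, ∀ x : Fin 3 → ℝ, x ≠ ξ → ∀ j : Fin 3,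
      navierOp (lam : ℂ) (mu : ℂ) (rho : ℂ) om (fun y i => ustar i m y) j x = 0 := by
  intro m x hx j
  have hrrr : ∀ y, r y = rr ξ y := by
    intro y
    rw [hr]
    unfold rr qq
    rw [Fin.sum_univ_three]
  set A : ℂ := 1 / (4 * (Real.pi : ℂ) * rho * om ^ 2) with hA
  set B : ℂ := 1 / (4 * (Real.pi : ℂ) * mu) with hB
  have hmu0 : (mu:ℂ) ≠ 0 := by
    exact_mod_cast hmu.ne'
  have hrho0 : (rho:ℂ) ≠ 0 := by
    exact_mod_cast hrho.ne'
  have hl2m : ((lam:ℂ) + 2*(mu:ℂ)) ≠ 0 := by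
    have h : (lam + 2*mu : ℝ) ≠ 0 := by nlinarith
    exact_mod_cast h
  have hpi0 : ((Real.pi : ℝ):ℂ) ≠ 0 := by exact_mod_cast Real.pi_ne_zero
  have hom2 : om^2 ≠ 0 := pow_ne_zero 2 hom
  have e1 : ((lam:ℂ) + 2*(mu:ℂ)) * k₁^2 = (rho:ℂ) * om^2 := by
    rw [hk₁]
    field_simp
  have e2 : (mu:ℂ) * k₂^2 = (rho:ℂ) * om^2 := by
    rw [hk₂]
    field_simp
  have hAB : A * k₂^2 = B := by
    rw [hA, hB, hk₂, div_mul_div_comm, one_mul]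
    rw [div_eq_div_iff (by simp [hpi0, hrho0, hmu0, hom]) (by simp [hpi0, hmu0])]
    ring
  -- derivative hypotheses
  have hgF0 : ∀ t : ℝ, t ≠ 0 → HasDerivAt (fun s : ℝ => f0 k₂ s - f0 k₁ s)
      (t * (f1 k₂ t - f1 k₁ t)) t := by
    intro t ht
    have h := (hasDerivAt_f0 k₂ ht).fun_sub (hasDerivAt_f0 k₁ ht)
    refine h.congr_deriv ?_
    ring
  have hgF1 : ∀ t : ℝ, t ≠ 0 → HasDerivAt (fun s : ℝ => f1 k₂ s - f1 k₁ s)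
      (t * (f2 k₂ t - f2 k₁ t)) t := by
    intro t ht
    have h := (hasDerivAt_f1 k₂ ht).fun_sub (hasDerivAt_f1 k₁ ht)
    refine h.congr_deriv ?_
    ring
  have hgF2 : ∀ t : ℝ, t ≠ 0 → HasDerivAt (fun s : ℝ => f2 k₂ s - f2 k₁ s)
      (t * (f3 k₂ t - f3 k₁ t)) t := by
    intro t ht
    have h := (hasDerivAt_f2 k₂ ht).fun_sub (hasDerivAt_f2 k₁ ht)
    refine h.congr_deriv ?_
    ring
  have hgF3 : ∀ t : ℝ, t ≠ 0 → HasDerivAt (fun s : ℝ => f3 k₂ s - f3 k₁ s)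
      (t * (f4 k₂ t - f4 k₁ t)) t := by
    intro t ht
    have h := (hasDerivAt_f3 k₂ ht).fun_sub (hasDerivAt_f3 k₁ ht)
    refine h.congr_deriv ?_
    ring
  have hg0₂ : ∀ t : ℝ, t ≠ 0 → HasDerivAt (f0 k₂) (t * f1 k₂ t) t :=
    fun t ht => hasDerivAt_f0 k₂ ht
  have hg1₂ : ∀ t : ℝ, t ≠ 0 → HasDerivAt (f1 k₂) (t * f2 k₂ t) t :=
    fun t ht => hasDerivAt_f1 k₂ ht
  have hgc : ∀ t : ℝ, t ≠ 0 → HasDerivAt (fun s : ℝ => (A * k₁^2) * f1 k₁ s)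
      (t * ((A * k₁^2) * f2 k₁ t)) t := by
    intro t ht
    have h := (hasDerivAt_f1 k₁ ht).const_mul (A * k₁^2)
    refine h.congr_deriv ?_
    ring
  -- first derivative of φ
  have hφ1 : ∀ y, y ≠ ξ → ∀ a, pd a φ y =
      dd ξ a y * (f1 k₂ (rr ξ y) - f1 k₁ (rr ξ y)) := by
    intro y hy a
    have he : ∀ z, z ≠ ξ → φ z = f0 k₂ (rr ξ z) - f0 k₁ (rr ξ z) := by
      intro z hz
      rw [hφ z, hrrr z]
      unfold f0
      rw [sub_div]
    rw [pd_congr (ev_of_onU he hy) a]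
    exact P1 hy hgF0 a
  -- second derivatives of φ
  have hφ2 : ∀ y, y ≠ ξ → ∀ a b, pd a (pd b φ) y =
      (if b = a then 1 else 0) * (f1 k₂ (rr ξ y) - f1 k₁ (rr ξ y)) +
        dd ξ b y * (dd ξ a y * (f2 k₂ (rr ξ y) - f2 k₁ (rr ξ y))) := by
    intro y hy a b
    rw [pd_congr (ev_of_onU (fun z hz => hφ1 z hz b) hy) a]
    exact P2 hy hgF1 b a
  -- closed form of the columns of ustar
  have hu : ∀ i : Fin 3, ∀ y, y ≠ ξ → ustar i m y =
      (A * (if m = i then 1 else 0)) * (f1 k₂ (rr ξ y) - f1 k₁ (rr ξ y)) +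
        A * (dd ξ m y * dd ξ i y * (f2 k₂ (rr ξ y) - f2 k₁ (rr ξ y))) +
        (B * (if i = m then 1 else 0)) * f0 k₂ (rr ξ y) := by
    intro i y hy
    rw [hustar i m y, hφ2 y hy i m, hrrr y]
    unfold f0
    ring
  -- canonical form of pd i (ustar i m)
  have hdcanon : ∀ i : Fin 3, ∀ y, y ≠ ξ → pd i (fun z => ustar i m z) y =
      (if i = m then 1 else 0) * (2*A*(dd ξ m y * (f2 k₂ (rr ξ y) - f2 k₁ (rr ξ y))) + B * (dd ξ m y * f1 k₂ (rr ξ y))) +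
        dd ξ i y^2 * (A * (dd ξ m y * (f3 k₂ (rr ξ y) - f3 k₁ (rr ξ y)))) +
        A * (dd ξ m y * (f2 k₂ (rr ξ y) - f2 k₁ (rr ξ y))) := by
    intro i y hy
    rw [pd_congr (ev_of_onU (fun z hz => hu i z hz) hy) i,
      P5 hy hgF1 hgF2 hg0₂ (A * (if m = i then 1 else 0)) A
        (B * (if i = m then 1 else 0)) m i i]
    by_cases him : i = m
    · simp [him]
      try ring
    · simp [him, Ne.symm him]
      try ring
  -- divergence of the column
  have hdiv : ∀ y, y ≠ ξ → divg (fun z i => ustar i m z) y =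
      dd ξ m y * ((A * k₁^2) * f1 k₁ (rr ξ y)) := by
    intro y hy
    have ht : rr ξ y ≠ 0 := (rr_pos hy).ne'
    have h0 : divg (fun z i => ustar i m z) y =
        ∑ i : Fin 3, pd i (fun z => ustar i m z) y := rfl
    rw [h0]
    have h1 : ∑ i : Fin 3, pd i (fun z => ustar i m z) y =
        ∑ i : Fin 3, ((if i = m then 1 else 0) *
            (2*A*(dd ξ m y * (f2 k₂ (rr ξ y) - f2 k₁ (rr ξ y))) + B * (dd ξ m y * f1 k₂ (rr ξ y))) +
          dd ξ i y^2 * (A * (dd ξ m y * (f3 k₂ (rr ξ y) - f3 k₁ (rr ξ y)))) +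
          A * (dd ξ m y * (f2 k₂ (rr ξ y) - f2 k₁ (rr ξ y)))) :=
      Finset.sum_congr rfl (fun i _ => hdcanon i y hy)
    rw [h1, Finset.sum_add_distrib, Finset.sum_add_distrib, sum_delta_mul,
      ← Finset.sum_mul, sum_dd_sq ξ y hy, Finset.sum_const, Finset.card_univ,
      Fintype.card_fin, nsmul_eq_mul]
    linear_combination (A * dd ξ m y) * hh2 k₂ ht - (A * dd ξ m y) * hh2 k₁ ht -
      (dd ξ m y * f1 k₂ (rr ξ y)) * hAB
  have hpdivg : pd j (divg (fun y i => ustar i m y)) x =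
      (if m = j then 1 else 0) * ((A * k₁^2) * f1 k₁ (rr ξ x)) +
        dd ξ m x * (dd ξ j x * ((A * k₁^2) * f2 k₁ (rr ξ x))) := by
    rw [pd_congr (ev_of_onU hdiv hx) j]
    exact P2 hx hgc m j
  -- first derivatives of the j-th component
  have hW : ∀ l : Fin 3, ∀ y, y ≠ ξ → pd l (fun z => ustar j m z) y =
      (A * (if j = l then 1 else 0)) * (dd ξ m y * (f2 k₂ (rr ξ y) - f2 k₁ (rr ξ y))) +
      (A * (if m = l then 1 else 0)) * (dd ξ j y * (f2 k₂ (rr ξ y) - f2 k₁ (rr ξ y))) +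
      (A * (if m = j then 1 else 0)) * (dd ξ l y * (f2 k₂ (rr ξ y) - f2 k₁ (rr ξ y))) +
      A * (dd ξ m y * dd ξ j y * dd ξ l y * (f3 k₂ (rr ξ y) - f3 k₁ (rr ξ y))) +
      (B * (if j = m then 1 else 0)) * (dd ξ l y * f1 k₂ (rr ξ y)) := by
    intro l y hy
    rw [pd_congr (ev_of_onU (fun z hz => hu j z hz) hy) l,
      P5 hy hgF1 hgF2 hg0₂ (A * (if m = j then 1 else 0)) A
        (B * (if j = m then 1 else 0)) m j l]
    ring
  -- canonical second derivatives of the j-th component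
  have hcanon : ∀ l : Fin 3, pd l (pd l (fun z => ustar j m z)) x =
      (if l = m then 1 else 0) * (2*A*(dd ξ j x * (dd ξ m x * (f3 k₂ (rr ξ x) - f3 k₁ (rr ξ x))))) +
      (if l = j then 1 else 0) * (2*A*(dd ξ m x * (dd ξ j x * (f3 k₂ (rr ξ x) - f3 k₁ (rr ξ x))))) +
      (if l = m then 1 else 0) * ((if l = j then 1 else 0) * (2*A*(f2 k₂ (rr ξ x) - f2 k₁ (rr ξ x)))) +
      dd ξ l x^2 * (A*(if m = j then 1 else 0)*(f3 k₂ (rr ξ x) - f3 k₁ (rr ξ x)) +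
        A*(dd ξ m x * dd ξ j x * (f4 k₂ (rr ξ x) - f4 k₁ (rr ξ x))) +
        B*(if j = m then 1 else 0)*f2 k₂ (rr ξ x)) +
      (A*(if m = j then 1 else 0)*(f2 k₂ (rr ξ x) - f2 k₁ (rr ξ x)) +
        A*(dd ξ m x * dd ξ j x * (f3 k₂ (rr ξ x) - f3 k₁ (rr ξ x))) +
        B*(if j = m then 1 else 0)*f1 k₂ (rr ξ x)) := by
    intro l
    rw [pd_congr (ev_of_onU (fun z hz => hW l z hz) hx) l,
      P6 hx hgF2 hgF3 hg1₂ (A * (if j = l then 1 else 0)) (A * (if m = l then 1 else 0))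
        (A * (if m = j then 1 else 0)) A (B * (if j = m then 1 else 0)) m j l l]
    by_cases h1 : l = m <;> by_cases h2 : l = j <;> by_cases h3 : m = j
    · simp [h1, h2, h3]
      try ring
    · exact absurd (h1.symm.trans h2) h3
    · exact absurd (h1.trans h3) h2
    · simp [h1, h2, h3, Ne.symm h2, Ne.symm h3]
      try ring
    · exact absurd (h2.trans h3.symm) h1
    · simp [h1, h2, h3, Ne.symm h1, Ne.symm h3]
      try ring
    · simp [h1, h2, h3, Ne.symm h1, Ne.symm h2]
      try ring
    · simp [h1, h2, h3, Ne.symm h1, Ne.symm h2, Ne.symm h3]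
      try ring
  -- the Laplacian of the j-th component
  have hlap : lap (fun y => ustar j m y) x =
      2*A*(dd ξ j x * (dd ξ m x * (f3 k₂ (rr ξ x) - f3 k₁ (rr ξ x)))) +
      2*A*(dd ξ m x * (dd ξ j x * (f3 k₂ (rr ξ x) - f3 k₁ (rr ξ x)))) +
      (if m = j then 1 else 0) * (2*A*(f2 k₂ (rr ξ x) - f2 k₁ (rr ξ x))) +
      ((rr ξ x : ℝ) : ℂ)^2 * (A*(if m = j then 1 else 0)*(f3 k₂ (rr ξ x) - f3 k₁ (rr ξ x)) +
        A*(dd ξ m x * dd ξ j x * (f4 k₂ (rr ξ x) - f4 k₁ (rr ξ x))) +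
        B*(if j = m then 1 else 0)*f2 k₂ (rr ξ x)) +
      3 * (A*(if m = j then 1 else 0)*(f2 k₂ (rr ξ x) - f2 k₁ (rr ξ x)) +
        A*(dd ξ m x * dd ξ j x * (f3 k₂ (rr ξ x) - f3 k₁ (rr ξ x))) +
        B*(if j = m then 1 else 0)*f1 k₂ (rr ξ x)) := by
    have h0 : lap (fun y => ustar j m y) x =
        ∑ l : Fin 3, pd l (pd l (fun z => ustar j m z)) x := rfl
    rw [h0]
    have h1 : ∑ l : Fin 3, pd l (pd l (fun z => ustar j m z)) x =
        ∑ l : Fin 3,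
          ((if l = m then 1 else 0) * (2*A*(dd ξ j x * (dd ξ m x * (f3 k₂ (rr ξ x) - f3 k₁ (rr ξ x))))) +
          (if l = j then 1 else 0) * (2*A*(dd ξ m x * (dd ξ j x * (f3 k₂ (rr ξ x) - f3 k₁ (rr ξ x))))) +
          (if l = m then 1 else 0) * ((if l = j then 1 else 0) * (2*A*(f2 k₂ (rr ξ x) - f2 k₁ (rr ξ x)))) +
          dd ξ l x^2 * (A*(if m = j then 1 else 0)*(f3 k₂ (rr ξ x) - f3 k₁ (rr ξ x)) +
            A*(dd ξ m x * dd ξ j x * (f4 k₂ (rr ξ x) - f4 k₁ (rr ξ x))) +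
            B*(if j = m then 1 else 0)*f2 k₂ (rr ξ x)) +
          (A*(if m = j then 1 else 0)*(f2 k₂ (rr ξ x) - f2 k₁ (rr ξ x)) +
            A*(dd ξ m x * dd ξ j x * (f3 k₂ (rr ξ x) - f3 k₁ (rr ξ x))) +
            B*(if j = m then 1 else 0)*f1 k₂ (rr ξ x))) :=
      Finset.sum_congr rfl (fun l _ => hcanon l)
    rw [h1, Finset.sum_add_distrib, Finset.sum_add_distrib, Finset.sum_add_distrib,
      Finset.sum_add_distrib, sum_delta_mul, sum_delta_mul, sum_delta_mul,
      ← Finset.sum_mul, sum_dd_sq ξ x hx, Finset.sum_const, Finset.card_univ,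
      Fintype.card_fin, nsmul_eq_mul]
    norm_num
  -- assemble
  have hδ : (if j = m then (1:ℂ) else 0) = (if m = j then 1 else 0) := by
    by_cases h : j = m
    · simp [h]
    · simp [h, Ne.symm h]
  have huv := hu j x hx
  have ht : rr ξ x ≠ 0 := (rr_pos hx).ne'
  simp only [navierOp]
  rw [hpdivg, hlap, huv, hδ]
  linear_combination ((mu:ℂ)*A*(if m = j then (1:ℂ) else 0)) * hh2 k₂ ht
    - ((mu:ℂ)*A*(if m = j then (1:ℂ) else 0)) * hh2 k₁ ht
    + ((mu:ℂ)*A*dd ξ m x*dd ξ j x) * hh3 k₂ ht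
    - ((mu:ℂ)*A*dd ξ m x*dd ξ j x) * hh3 k₁ ht
    + ((mu:ℂ)*B*(if m = j then (1:ℂ) else 0)) * hh1 k₂ ht
    + (A*(if m = j then (1:ℂ) else 0)*f1 k₁ (rr ξ x)
        + A*dd ξ m x*dd ξ j x*f2 k₁ (rr ξ x)) * e1
    + (-(A*(if m = j then (1:ℂ) else 0)*f1 k₂ (rr ξ x))
        - A*dd ξ m x*dd ξ j x*f2 k₂ (rr ξ x)
        - B*(if m = j then (1:ℂ) else 0)*f0 k₂ (rr ξ x)) * e2
end

section
/- Let λ, μ ∈ ℝ, ρ > 0, ω̃ ∈ ℂ with λ+2μ ≠ 0 and μ ≠ 0, and set k₁² = ρω̃²/(λ+2μ), k₂² = ρω̃²/μ. Fix η₁, η₂ ∈ ℂ, let β₁, β₂ ∈ ℂ satisfy β₁² = η₁² + η₂² − k₁² and β₂² = η₁² + η₂² − k₂², set β₃ = β₂, and let ν¹ = (−η₁, −η₂, iβ₁), ν² = (−β₂, 0, iη₁), ν³ = (−η₂, η₁, 0). Then for any coefficients C¹, C², C³ ∈ ℂ, the function w : ℝ³ → ℂ³ given by w(x) = Σ_{m=1}^{3}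 Cᵐ νᵐ exp(β_m x₃ + i(η₁x₁ + η₂x₂)) satisfies the homogeneous time-harmonic viscoelastic Navier equation (λ+μ)∂_j(div w) + μΔw_j + ρω̃² w_j = 0 for j = 1,2,3 at every point of ℝ³. -/
open Complex Matrix

lemma hasFDerivAt_sumexp (A : Fin 3 → ℂ) (c : Fin 3 → Fin 3 → ℂ) (x : Fin 3 → ℝ) :
    HasFDerivAt (fun y : Fin 3 → ℝ => ∑ m : Fin 3, A m * Complex.exp (∑ i : Fin 3, c m i * y i))
      (∑ m : Fin 3, (A m * Complex.exp (∑ i : Fin 3, c m i * x i)) •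
        (∑ i : Fin 3, c m i • ((Complex.ofRealCLM : ℝ →L[ℝ] ℂ).comp
          (ContinuousLinearMap.proj i : (Fin 3 → ℝ) →L[ℝ] ℝ)))) x := by
  apply HasFDerivAt.fun_sum
  intro m _
  have h1 : HasFDerivAt (fun y : Fin 3 → ℝ => ∑ i : Fin 3, c m i * (y i : ℂ))
      (∑ i : Fin 3, c m i • ((Complex.ofRealCLM : ℝ →L[ℝ] ℂ).comp
        (ContinuousLinearMap.proj i : (Fin 3 → ℝ) →L[ℝ] ℝ))) x := by
    apply HasFDerivAt.fun_sum
    intro i _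
    exact (((Complex.ofRealCLM : ℝ →L[ℝ] ℂ).comp
      (ContinuousLinearMap.proj i : (Fin 3 → ℝ) →L[ℝ] ℝ)).hasFDerivAt).const_mul _
  have h2 := (h1.cexp).const_mul (A m)
  rwa [smul_smul] at h2

lemma pd_sumexp (A : Fin 3 → ℂ) (c : Fin 3 → Fin 3 → ℂ) (j : Fin 3) (x : Fin 3 → ℝ) :
    pd j (fun y => ∑ m : Fin 3, A m * Complex.exp (∑ i : Fin 3, c m i * y i)) x
    = ∑ m : Fin 3, A m * c m j * Complex.exp (∑ i : Fin 3, c m i * x i) := by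
  unfold pd
  rw [(hasFDerivAt_sumexp A c x).fderiv]
  simp only [ContinuousLinearMap.coe_sum', Finset.sum_apply, ContinuousLinearMap.smul_apply,
    ContinuousLinearMap.coe_comp', Function.comp_apply, ContinuousLinearMap.proj_apply,
    Complex.ofRealCLM_apply, smul_eq_mul]
  refine Finset.sum_congr rfl fun m _ => ?_
  have : ∑ i : Fin 3, c m i * (((Pi.single j 1 : Fin 3 → ℝ) i : ℝ) : ℂ) = c m j := by
    simp [Pi.single_apply, apply_ite (fun r : ℝ => (r : ℂ))]
  rw [this]
  ring

lemma main_aux (lam mu rho om : ℂ) (c A : Fin 3 → Fin 3 → ℂ)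
    (hzero : ∀ m j : Fin 3,
      (lam + mu) * ((∑ i : Fin 3, A m i * c m i) * c m j) +
        mu * (A m j * (∑ i : Fin 3, c m i * c m i)) + rho * om ^ 2 * A m j = 0)
    (w : (Fin 3 → ℝ) → Fin 3 → ℂ)
    (hw : ∀ x j, w x j = ∑ m : Fin 3, A m j * Complex.exp (∑ i : Fin 3, c m i * x i)) :
    ∀ x j, navierOp lam mu rho om w j x = 0 := by
  intro x j
  have hfun : ∀ j' : Fin 3, (fun y => w y j') =
      fun y => ∑ m : Fin 3, A m j' * Complex.exp (∑ i : Fin 3, c m i * y i) :=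
    fun j' => funext fun y => hw y j'
  have hpd1 : ∀ (i j' : Fin 3), pd i (fun y => w y j') =
      fun y => ∑ m : Fin 3, (A m j' * c m i) * Complex.exp (∑ i' : Fin 3, c m i' * y i') := by
    intro i j'
    funext y
    rw [hfun j', pd_sumexp]
  have hdiv : divg w =
      fun y => ∑ m : Fin 3, (∑ i : Fin 3, A m i * c m i) *
        Complex.exp (∑ i' : Fin 3, c m i' * y i') := by
    funext y
    show (∑ i : Fin 3, pd i (fun z => w z i) y) = _
    calc ∑ i : Fin 3, pd i (fun z => w z i) y
        = ∑ i : Fin 3, ∑ m : Fin 3, (A m i * c m i) *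
            Complex.exp (∑ i' : Fin 3, c m i' * y i') := by
          refine Finset.sum_congr rfl fun i _ => ?_
          rw [hpd1 i i]
      _ = _ := by
          rw [Finset.sum_comm]
          refine Finset.sum_congr rfl fun m _ => ?_
          rw [Finset.sum_mul]
  have hpdiv : pd j (divg w) x = ∑ m : Fin 3, ((∑ i : Fin 3, A m i * c m i) * c m j) *
      Complex.exp (∑ i : Fin 3, c m i * x i) := by
    rw [hdiv, pd_sumexp]
  have hlap : lap (fun y => w y j) x = ∑ m : Fin 3, (A m j * (∑ i : Fin 3, c m i * c m i)) *
      Complex.exp (∑ i : Fin 3, c m i * x i) := by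
    show (∑ i : Fin 3, pd i (pd i (fun y => w y j)) x) = _
    calc ∑ i : Fin 3, pd i (pd i (fun y => w y j)) x
        = ∑ i : Fin 3, ∑ m : Fin 3, ((A m j * c m i) * c m i) *
            Complex.exp (∑ i' : Fin 3, c m i' * x i') := by
          refine Finset.sum_congr rfl fun i _ => ?_
          rw [hpd1 i j, pd_sumexp]
      _ = _ := by
          rw [Finset.sum_comm]
          refine Finset.sum_congr rfl fun m _ => ?_
          rw [Finset.mul_sum, Finset.sum_mul]
          refine Finset.sum_congr rfl fun i _ => ?_
          ring
  show (lam + mu) * pd j (divg w) x + mu * lap (fun y => w y j) x + rho * om ^ 2 * w x j = 0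
  rw [hpdiv, hlap, hw x j, Finset.mul_sum, Finset.mul_sum, Finset.mul_sum,
    ← Finset.sum_add_distrib, ← Finset.sum_add_distrib]
  refine Finset.sum_eq_zero fun m _ => ?_
  linear_combination Complex.exp (∑ i : Fin 3, c m i * x i) * hzero m j

theorem correction_term_solves_navier
    (lam mu : ℝ) (rho : ℝ) (hrho : 0 < rho) (om : ℂ)
    (hlm : (lam : ℂ) + 2 * mu ≠ 0) (hmu : (mu : ℂ) ≠ 0)
    (k₁ k₂ : ℂ)
    (hk₁ : k₁ ^ 2 = (rho : ℂ) * om ^ 2 / ((lam : ℂ) + 2 * mu))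
    (hk₂ : k₂ ^ 2 = (rho : ℂ) * om ^ 2 / (mu : ℂ))
    (η₁ η₂ β₁ β₂ : ℂ)
    (hβ₁ : β₁ ^ 2 = η₁ ^ 2 + η₂ ^ 2 - k₁ ^ 2)
    (hβ₂ : β₂ ^ 2 = η₁ ^ 2 + η₂ ^ 2 - k₂ ^ 2)
    (C : Fin 3 → ℂ)
    (w : (Fin 3 → ℝ) → Fin 3 → ℂ)
    (hw : ∀ x j, w x j =
      ∑ m : Fin 3,
        C m * (![![-η₁, -η₂, Complex.I * β₁],
                  ![-β₂, 0, Complex.I * η₁],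
                  ![-η₂, η₁, 0]] : Fin 3 → Fin 3 → ℂ) m j *
          Complex.exp ((![β₁, β₂, β₂] : Fin 3 → ℂ) m * x 2 +
            Complex.I * (η₁ * x 0 + η₂ * x 1))) :
    ∀ x : Fin 3 → ℝ, ∀ j : Fin 3,
      navierOp (lam : ℂ) (mu : ℂ) (rho : ℂ) om w j x = 0 := by
  have hK1 : (rho : ℂ) * om ^ 2 = (η₁ ^ 2 + η₂ ^ 2 - β₁ ^ 2) * ((lam : ℂ) + 2 * mu) := by
    field_simp at hk₁
    linear_combination -hk₁ + ((lam : ℂ) + 2 * mu) * hβ₁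
  have hK2 : (rho : ℂ) * om ^ 2 = (η₁ ^ 2 + η₂ ^ 2 - β₂ ^ 2) * (mu : ℂ) := by
    field_simp at hk₂
    linear_combination -hk₂ + (mu : ℂ) * hβ₂
  intro x j
  refine main_aux (lam : ℂ) (mu : ℂ) (rho : ℂ) om
    (fun m => ![Complex.I * η₁, Complex.I * η₂, (![β₁, β₂, β₂] : Fin 3 → ℂ) m])
    (fun m j' => C m * (![![-η₁, -η₂, Complex.I * β₁],
                  ![-β₂, 0, Complex.I * η₁],
                  ![-η₂, η₁, 0]] : Fin 3 → Fin 3 → ℂ) m j') ?_ w ?_ x j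
  · intro m j'
    fin_cases m <;> fin_cases j' <;>
      simp only [Fin.sum_univ_three, Fin.reduceFinMk, Fin.isValue, Matrix.cons_val_zero,
        Matrix.cons_val_one, Matrix.head_cons, Matrix.cons_val_two, Nat.succ_eq_add_one,
        Nat.reduceAdd, Matrix.tail_cons, Matrix.head_fin_const, Matrix.cons_val',
        Matrix.empty_val', Matrix.cons_val_fin_one]
    · linear_combination C 0 * (-η₁) * hK1 +
        (C 0 * η₁ * ((lam + mu) * (β₁ ^ 2 - η₁ ^ 2 - η₂ ^ 2) - mu * (η₁ ^ 2 + η₂ ^ 2))) *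
          Complex.I_sq
    · linear_combination C 0 * (-η₂) * hK1 +
        (C 0 * η₂ * ((lam + mu) * (β₁ ^ 2 - η₁ ^ 2 - η₂ ^ 2) - mu * (η₁ ^ 2 + η₂ ^ 2))) *
          Complex.I_sq
    · linear_combination C 0 * Complex.I * β₁ * hK1 +
        (C 0 * Complex.I * β₁ * mu * (η₁ ^ 2 + η₂ ^ 2)) * Complex.I_sq
    · linear_combination C 1 * (-β₂) * hK2 +
        ((mu : ℂ) * C 1 * (-β₂) * (η₁ ^ 2 + η₂ ^ 2)) * Complex.I_sq
    · ring
    · linear_combination C 1 * (Complex.I * η₁) * hK2 +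
        ((mu : ℂ) * C 1 * (Complex.I * η₁) * (η₁ ^ 2 + η₂ ^ 2)) * Complex.I_sq
    · linear_combination C 2 * (-η₂) * hK2 +
        ((mu : ℂ) * C 2 * (-η₂) * (η₁ ^ 2 + η₂ ^ 2)) * Complex.I_sq
    · linear_combination C 2 * η₁ * hK2 +
        ((mu : ℂ) * C 2 * η₁ * (η₁ ^ 2 + η₂ ^ 2)) * Complex.I_sq
    · ring
  · intro y j'
    rw [hw y j']
    refine Finset.sum_congr rfl fun m _ => ?_
    have harg : (∑ i : Fin 3,
        (fun m => ![Complex.I * η₁, Complex.I * η₂, (![β₁, β₂, β₂] : Fin 3 → ℂ) m]) m i * (y i : ℂ))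
        = (![β₁, β₂, β₂] : Fin 3 → ℂ) m * y 2 + Complex.I * (η₁ * y 0 + η₂ * y 1) := by
      simp only [Fin.sum_univ_three, Matrix.cons_val_zero, Matrix.cons_val_one, Matrix.head_cons,
        Matrix.cons_val_two, Matrix.tail_cons]
      ring
    rw [harg]
end
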